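/- arXiv:0808.2008 — 2 statements merged into one kernel-verified Lean document; each statement's English description precedes it below -/
import Mathlib

section
/- Let (V, λ) be an alternating bilinear form over a commutative ring R (λ(x,x) = 0 for all x) and let u, v ∈ V satisfy λ(u,v) = 0, and let a ∈ R. Then the symplectic transvection τ(x) = x + u·λ(v,x) + v·λ(u,x) + u·a·λ(u,x) is an isometry of (V, λ). Moreover, for u fixed and v, v' with λ(u,v) = λ(u,v') = 0 and a, a' ∈ R, the composition satisfies τ_{u,a',v'} ∘ τ_{u,a,v} = τ_{u, a' + λ(v',v) + a, v + v'}. -/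
/-- The symplectic transvection `τ_{u,a,v}` for an alternating bilinear form. -/
def sympTransvection {R : Type*} [CommRing R] {V : Type*} [AddCommGroup V] [Module R V]
    (l : V →ₗ[R] V →ₗ[R] R) (u : V) (a : R) (v : V) (x : V) : V :=
  x + l v x • u + l u x • v + (a * l u x) • u

/-- Symplectic transvections are isometries, and they compose by the rule
`τ_{u,a',v'} ∘ τ_{u,a,v} = τ_{u, a' + λ(v',v) + a, v + v'}`. -/
theorem sympTransvection_isometry_and_comp
    (R : Type*) [CommRing R] (V : Type*) [AddCommGroup V] [Module R V]
    (l : V →ₗ[R] V →ₗ[R] R) (halt : ∀ x : V, l x x = 0)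
    (u v v' : V) (a a' : R) (huv : l u v = 0) (huv' : l u v' = 0) :
    (∀ x y : V, l (sympTransvection l u a v x) (sympTransvection l u a v y) = l x y) ∧
    (∀ x : V, sympTransvection l u a' v' (sympTransvection l u a v x)
        = sympTransvection l u (a' + l v' v + a) (v + v') x) := by
  have skew : ∀ x y : V, l y x = - l x y := by
    intro x y
    have h := halt (x + y)
    simp only [map_add, LinearMap.add_apply, halt] at h
    linear_combination h
  have hvu : l v u = 0 := by rw [skew, huv, neg_zero]
  have hvu' : l v' u = 0 := by rw [skew, huv', neg_zero]
  constructor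
  · intro x y
    simp only [sympTransvection, map_add, map_smul, LinearMap.add_apply,
      LinearMap.smul_apply, smul_eq_mul, halt, huv, hvu]
    rw [skew v x, skew u x]
    ring
  · intro x
    simp only [sympTransvection, map_add, map_smul, LinearMap.add_apply,
      LinearMap.smul_apply, smul_eq_mul, halt, huv, huv', hvu, hvu']
    module
end

section
/- Let n = p₁^{m₁}⋯p_k^{m_k} be a product of powers of k distinct odd primes with each mᵢ ≥ 1. Then the group G = {u ∈ (ℤ/2nℤ)ˣ : u² ≡ 1 mod 4n} is isomorphic to (ℤ/2ℤ)^k, and the quotient of G by the subgroup {±1} is isomorphic to (ℤ/2ℤ)^{k−1}. -/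
open Module in
lemma lemA {A : Type*} [CommGroup A] [Finite A] (j : ℕ) (hcard : Nat.card A = 2 ^ j)
    (hexp : ∀ a : A, a ^ 2 = 1) :
    Nonempty (A ≃* (Fin j → Multiplicative (ZMod 2))) := by
  letI : Module (ZMod 2) (Additive A) := AddCommGroup.zmodModule (by
    intro x
    apply Additive.toMul.injective
    simpa [two_nsmul, ← pow_two] using hexp x.toMul)
  haveI : Module.Finite (ZMod 2) (Additive A) :=
    Module.finite_iff_finite.mpr (by exact ‹Finite A›)
  have hfr : finrank (ZMod 2) (Additive A) = j := by
    cases nonempty_fintype A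
    have := card_eq_pow_finrank (K := ZMod 2) (V := Additive A)
    rw [ZMod.card, ← Nat.card_eq_fintype_card,
      Nat.card_congr (Additive.toMul (α := A)), hcard] at this
    exact (Nat.pow_right_injective (le_refl 2) this).symm
  have hfr2 : finrank (ZMod 2) (Fin j → ZMod 2) = j := Module.finrank_fin_fun _
  obtain ⟨e⟩ := FiniteDimensional.nonempty_linearEquiv_of_finrank_eq
    (R := ZMod 2) (M := Additive A) (M' := Fin j → ZMod 2) (hfr.trans hfr2.symm)
  exact ⟨(MulEquiv.multiplicativeAdditive A).symm.trans <|
    (AddEquiv.toMultiplicative e.toAddEquiv).trans (MulEquiv.funMultiplicative _ _)⟩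


/-- Square roots of one among units correspond to square roots of one in the monoid. -/
def unitsSq1Equiv (M : Type*) [CommMonoid M] :
    {x : Mˣ // x ^ 2 = 1} ≃ {y : M // y ^ 2 = 1} where
  toFun x := ⟨(x : Mˣ), by rw [← Units.val_pow_eq_pow_val, x.2, Units.val_one]⟩
  invFun y := ⟨⟨y.1, y.1, by rw [← sq, y.2], by rw [← sq, y.2]⟩,
    Units.ext (by simp [← sq, y.2])⟩
  left_inv x := Subtype.ext (Units.ext rfl)
  right_inv y := rfl

lemma mulEquiv_sq1_iff {M N : Type*} [Monoid M] [Monoid N] (e : M ≃* N) (a : M) :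
    a ^ 2 = 1 ↔ (e a) ^ 2 = 1 := by
  rw [← map_pow, MulEquiv.map_eq_one_iff]

lemma zmod_pp_sq_eq_one {p m : ℕ} (hp : p.Prime) (hodd : Odd p) (hm : 1 ≤ m)
    (y : ZMod (p ^ m)) (hy : y ^ 2 = 1) : y = 1 ∨ y = -1 := by
  haveI : NeZero (p ^ m) := ⟨pow_ne_zero _ hp.pos.ne'⟩
  set z : ℤ := ((y.val : ℕ) : ℤ) with hz
  have hcast : ((z : ℤ) : ZMod (p ^ m)) = y := by
    simp [hz, ZMod.natCast_val, ZMod.cast_id]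
  have hdvd : ((p ^ m : ℕ) : ℤ) ∣ (z - 1) * (z + 1) := by
    have : (((z ^ 2 - 1 : ℤ)) : ZMod (p ^ m)) = 0 := by
      push_cast [hcast, hy]; ring
    have := (ZMod.intCast_zmod_eq_zero_iff_dvd _ _).mp this
    have hfactor : z ^ 2 - 1 = (z - 1) * (z + 1) := by ring
    rwa [hfactor] at this
  have hpz : Prime (p : ℤ) := Nat.prime_iff_prime_int.mp hp
  have hpdvd : (p : ℤ) ∣ (z - 1) * (z + 1) := by
    refine dvd_trans ?_ hdvd
    exact_mod_cast dvd_pow_self (p : ℤ) (Nat.one_le_iff_ne_zero.mp hm)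
  have hp2 : ¬ ((p : ℤ) ∣ 2) := by
    intro h
    have hpd : p ∣ 2 := by exact_mod_cast h
    have hpe : p = 2 := (Nat.prime_dvd_prime_iff_eq hp Nat.prime_two).mp hpd
    rw [hpe, Nat.odd_iff] at hodd
    omega
  push_cast at hdvd
  rcases hpz.dvd_mul.mp hpdvd with h1 | h1
  · left
    have hnot : ¬ ((p : ℤ) ∣ (z + 1)) := by
      intro h2
      exact hp2 (by have := dvd_sub h2 h1; simpa using this)
    have hcop : IsCoprime ((p : ℤ) ^ m) (z + 1) :=
      ((hpz.coprime_iff_not_dvd).mpr hnot).pow_left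
    have : ((p : ℤ) ^ m) ∣ (z - 1) := hcop.dvd_of_dvd_mul_right hdvd
    have : (((z - 1 : ℤ)) : ZMod (p ^ m)) = 0 := by
      rw [ZMod.intCast_zmod_eq_zero_iff_dvd]; exact_mod_cast this
    have hy1 : y - 1 = 0 := by push_cast [hcast] at this ⊢; linear_combination this
    exact sub_eq_zero.mp hy1
  · right
    have hnot : ¬ ((p : ℤ) ∣ (z - 1)) := by
      intro h2
      exact hp2 (by have := dvd_sub h1 h2; simpa using this)
    have hcop : IsCoprime ((p : ℤ) ^ m) (z - 1) :=
      ((hpz.coprime_iff_not_dvd).mpr hnot).pow_left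
    have : ((p : ℤ) ^ m) ∣ (z + 1) := hcop.dvd_of_dvd_mul_left hdvd
    have : (((z + 1 : ℤ)) : ZMod (p ^ m)) = 0 := by
      rw [ZMod.intCast_zmod_eq_zero_iff_dvd]; exact_mod_cast this
    have hy1 : y + 1 = 0 := by push_cast [hcast] at this ⊢; linear_combination this
    exact eq_neg_of_add_eq_zero_left hy1

lemma card_sq1_zmod_pp {p m : ℕ} (hp : p.Prime) (hodd : Odd p) (hm : 1 ≤ m) :
    Nat.card {y : ZMod (p ^ m) // y ^ 2 = 1} = 2 := by
  haveI : Fact (2 < p ^ m) := ⟨by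
    have h3 : 3 ≤ p := by
      rcases hp.two_le.lt_or_eq with h | h
      · omega
      · exfalso; rw [← h] at hodd; simp [Nat.odd_iff] at hodd
    calc 2 < 3 := by norm_num
    _ ≤ p := h3
    _ = p ^ 1 := (pow_one p).symm
    _ ≤ p ^ m := Nat.pow_le_pow_right hp.pos hm⟩
  have hset : {y : ZMod (p ^ m) | y ^ 2 = 1} = {1, -1} := by
    ext y
    constructor
    · intro hy; exact zmod_pp_sq_eq_one hp hodd hm y hy
    · rintro (rfl | rfl) <;> simp
  have hne : (1 : ZMod (p ^ m)) ≠ -1 := fun h => ZMod.neg_one_ne_one h.symm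
  calc Nat.card {y : ZMod (p ^ m) // y ^ 2 = 1}
      = Nat.card ({y : ZMod (p ^ m) | y ^ 2 = 1} : Set _) := rfl
    _ = ({y : ZMod (p ^ m) | y ^ 2 = 1} : Set _).ncard := Nat.card_coe_set_eq _
    _ = ({1, -1} : Set (ZMod (p ^ m))).ncard := by rw [hset]
    _ = 2 := Set.ncard_pair hne




/-- For `n = p₁^{m₁} ⋯ p_k^{m_k}` a product of powers of `k` distinct odd primes,
the group `G = {u ∈ (ℤ/2n)ˣ : u² ≡ 1 mod 4n}` is isomorphic to `(ℤ/2)^k`, and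
`G/{±1}` is isomorphic to `(ℤ/2)^{k-1}`. -/
theorem units_square_one_mod_4n_iso
    (k : ℕ) (hk : 0 < k) (p m : Fin k → ℕ)
    (hp : ∀ i, (p i).Prime) (hodd : ∀ i, Odd (p i)) (hinj : Function.Injective p)
    (hm : ∀ i, 1 ≤ m i) (n : ℕ) (hn : n = ∏ i, p i ^ m i)
    (G : Subgroup (ZMod (2 * n))ˣ)
    (hG : ∀ u : (ZMod (2 * n))ˣ,
      u ∈ G ↔ (4 * (n : ℤ)) ∣ (((u : ZMod (2 * n)).val : ℤ) ^ 2 - 1))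
    (H : Subgroup G)
    (hH : ∀ x : G, x ∈ H ↔
      ((x : (ZMod (2 * n))ˣ) = 1 ∨ (x : (ZMod (2 * n))ˣ) = -1)) :
    Nonempty (G ≃* (Fin k → Multiplicative (ZMod 2))) ∧
    Nonempty ((G ⧸ H) ≃* (Fin (k - 1) → Multiplicative (ZMod 2))) := by
  -- basic facts about n
  have hnodd : Odd n := by
    rw [hn]
    exact Finset.prod_induction _ Odd (fun a b => Odd.mul) odd_one
      (fun i _ => (hodd i).pow)
  have hnpos : 0 < n := by
    rcases hnodd with ⟨t, ht⟩; omega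
  have hn3 : 3 ≤ n := by
    have i0 : Fin k := ⟨0, hk⟩
    have h1 : 3 ≤ p i0 := by
      have h2 := (hp i0).two_le
      have h3 := hodd i0
      rw [Nat.odd_iff] at h3
      omega
    have h2 : p i0 ≤ p i0 ^ m i0 := by
      calc p i0 = p i0 ^ 1 := (pow_one _).symm
      _ ≤ p i0 ^ m i0 := Nat.pow_le_pow_right (hp i0).pos (hm i0)
    have h3 : p i0 ^ m i0 ≤ n := by
      rw [hn]
      exact Finset.single_le_prod' (fun i _ => Nat.one_le_iff_ne_zero.mpr
        (pow_ne_zero _ (hp i).pos.ne')) (Finset.mem_univ i0)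
    omega
  haveI : NeZero n := ⟨hnpos.ne'⟩
  haveI : NeZero (2 * n) := ⟨by omega⟩
  haveI : Fact (2 < 2 * n) := ⟨by omega⟩
  have hcop2 : Nat.Coprime 2 n := hnodd.coprime_two_left
  -- the isomorphism (ZMod (2n))ˣ ≃* (ZMod n)ˣ
  haveI : Subsingleton (ZMod 2)ˣ := by
    constructor; decide
  haveI : Unique (ZMod 2)ˣ := uniqueOfSubsingleton 1
  let e1 : ZMod (2 * n) ≃+* ZMod 2 × ZMod n := ZMod.chineseRemainder hcop2
  let ψ : (ZMod (2 * n))ˣ ≃* (ZMod n)ˣ :=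
    (Units.mapEquiv e1.toMulEquiv).trans (MulEquiv.prodUnits.trans MulEquiv.uniqueProd)
  have hψval : ∀ u : (ZMod (2 * n))ˣ,
      ((ψ u : (ZMod n)ˣ) : ZMod n) = ZMod.castHom (dvd_mul_left n 2) (ZMod n)
        (u : ZMod (2 * n)) := by
    intro u
    have hrfl : ((ψ u : (ZMod n)ˣ) : ZMod n) =
        ((RingHom.snd (ZMod 2) (ZMod n)).comp e1.toRingHom) (u : ZMod (2 * n)) := rfl
    rw [hrfl, RingHom.ext_zmod ((RingHom.snd (ZMod 2) (ZMod n)).comp e1.toRingHom)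
      (ZMod.castHom (dvd_mul_left n 2) (ZMod n))]
  -- the key membership criterion
  have key : ∀ u : (ZMod (2 * n))ˣ, u ∈ G ↔ (ψ u) ^ 2 = 1 := by
    intro u
    rw [hG]
    set z : ℤ := (((u : ZMod (2 * n)).val : ℕ) : ℤ) with hzdef
    have hzodd : Odd z := by
      rw [Int.odd_coe_nat]
      have hcopz := ZMod.val_coe_unit_coprime u
      rw [Nat.odd_iff]
      rcases Nat.even_or_odd ((u : ZMod (2 * n)).val) with he | ho
      · exfalso
        obtain ⟨t, ht⟩ := he
        have : 2 ∣ Nat.gcd ((u : ZMod (2 * n)).val) (2 * n) :=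
          Nat.dvd_gcd ⟨t, by omega⟩ ⟨n, rfl⟩
        rw [hcopz] at this; omega
      · exact Nat.odd_iff.mp ho
    have hz4 : (4 : ℤ) ∣ z ^ 2 - 1 := by
      obtain ⟨t, ht⟩ := hzodd
      exact ⟨t ^ 2 + t, by rw [ht]; ring⟩
    have hun : (ψ u) ^ 2 = 1 ↔ (n : ℤ) ∣ z ^ 2 - 1 := by
      rw [Units.ext_iff]
      have hval : ((ψ u : (ZMod n)ˣ) : ZMod n) = ((z : ℤ) : ZMod n) := by
        rw [hψval u, ZMod.castHom_apply, hzdef]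
        push_cast
        rw [ZMod.natCast_val]
      constructor
      · intro h
        rw [← ZMod.intCast_zmod_eq_zero_iff_dvd]
        have : (((ψ u : (ZMod n)ˣ) : ZMod n)) ^ 2 = 1 := by
          rw [← Units.val_pow_eq_pow_val, h, Units.val_one]
        rw [hval] at this
        push_cast
        rw [this]; ring
      · intro h
        rw [← ZMod.intCast_zmod_eq_zero_iff_dvd] at h
        push_cast at h
        have h1 : (((ψ u : (ZMod n)ˣ) : ZMod n)) ^ 2 = 1 := by
          rw [hval]; linear_combination h
        rw [← Units.val_pow_eq_pow_val] at h1
        rw [h1, Units.val_one]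
    constructor
    · intro h
      rw [hun]
      exact dvd_trans (dvd_mul_left (n : ℤ) 4) h
    · intro h
      rw [hun] at h
      have hc : IsCoprime (4 : ℤ) (n : ℤ) := by
        have h4 : Nat.Coprime 4 n := by
          have := Nat.Coprime.pow_left 2 hcop2
          norm_num at this
          exact this
        have := h4.cast (R := ℤ)
        push_cast at this
        exact this
      exact hc.mul_dvd hz4 h
  -- pairwise coprimality and CRT for n
  have hcop : Pairwise (Function.onFun Nat.Coprime fun i => p i ^ m i) := by
    intro i j hij
    exact Nat.Coprime.pow _ _
      ((Nat.coprime_primes (hp i) (hp j)).mpr (fun h => hij (hinj h)))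
  have e2 : ZMod n ≃+* ∀ i, ZMod (p i ^ m i) := by
    rw [hn]; exact ZMod.prodEquivPi _ hcop
  -- equivalence chain computing the cardinality of G
  have eA : G ≃ {v : (ZMod n)ˣ // v ^ 2 = 1} := ψ.toEquiv.subtypeEquiv key
  have eB : {v : (ZMod n)ˣ // v ^ 2 = 1} ≃ {y : ZMod n // y ^ 2 = 1} :=
    unitsSq1Equiv (ZMod n)
  have eC : {y : ZMod n // y ^ 2 = 1} ≃
      {w : ∀ i, ZMod (p i ^ m i) // w ^ 2 = 1} :=
    e2.toEquiv.subtypeEquiv (fun y => mulEquiv_sq1_iff e2.toMulEquiv y)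
  have eD : {w : ∀ i, ZMod (p i ^ m i) // w ^ 2 = 1} ≃
      {w : ∀ i, ZMod (p i ^ m i) // ∀ i, (w i) ^ 2 = 1} :=
    Equiv.subtypeEquiv (Equiv.refl _) (fun w => by
      simp only [Equiv.refl_apply, funext_iff]
      constructor
      · intro h i; have := h i; simpa using this
      · intro h i; simpa using h i)
  have eE : {w : ∀ i, ZMod (p i ^ m i) // ∀ i, (w i) ^ 2 = 1} ≃
      ∀ i, {x : ZMod (p i ^ m i) // x ^ 2 = 1} :=
    Equiv.subtypePiEquivPi (p := fun i (x : ZMod (p i ^ m i)) => x ^ 2 = 1)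
  have cardG : Nat.card G = 2 ^ k := by
    rw [Nat.card_congr (eA.trans (eB.trans (eC.trans (eD.trans eE)))), Nat.card_pi,
      Finset.prod_congr rfl (fun i _ => card_sq1_zmod_pp (hp i) (hodd i) (hm i)),
      Finset.prod_const, Finset.card_univ, Fintype.card_fin]
  have hexpG : ∀ x : G, x ^ 2 = 1 := by
    intro x
    have h1 : (ψ (x : (ZMod (2 * n))ˣ)) ^ 2 = 1 := (key _).mp x.2
    have h2 : ((x : (ZMod (2 * n))ˣ)) ^ 2 = 1 :=
      ψ.injective (by rw [map_pow, h1, map_one])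
    exact Subtype.ext (by push_cast; exact h2)
  have first : Nonempty (G ≃* (Fin k → Multiplicative (ZMod 2))) :=
    lemA k cardG hexpG
  -- the subgroup H = {±1}
  have hneg : (-1 : (ZMod (2 * n))ˣ) ∈ G := by
    rw [key]
    rw [← map_pow]
    norm_num
  have hone_ne : (1 : G) ≠ (⟨-1, hneg⟩ : G) := by
    intro h
    have h2 : ((1 : G) : (ZMod (2 * n))ˣ) = -1 := by rw [h]
    have h3 : ((1 : (ZMod (2 * n))ˣ) : ZMod (2 * n)) = ((-1 : (ZMod (2 * n))ˣ) : ZMod (2 * n)) := by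
      exact_mod_cast congrArg (Units.val) h2
    rw [Units.val_one, Units.val_neg, Units.val_one] at h3
    exact ZMod.neg_one_ne_one h3.symm
  have hHset : (H : Set G) = {1, ⟨-1, hneg⟩} := by
    ext x
    simp only [SetLike.mem_coe, hH x, Set.mem_insert_iff, Set.mem_singleton_iff,
      Subtype.ext_iff]
    rfl
  have cardH : Nat.card H = 2 := by
    have h1 : Nat.card H = (H : Set G).ncard := by
      rw [← Nat.card_coe_set_eq]; rfl
    rw [h1, hHset, Set.ncard_pair hone_ne]
  have cardQ : Nat.card (G ⧸ H) = 2 ^ (k - 1) := by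
    have h := Subgroup.card_eq_card_quotient_mul_card_subgroup H
    rw [cardG, cardH] at h
    have h2 : 2 ^ (k - 1) * 2 = 2 ^ k := by
      rw [← pow_succ, Nat.sub_add_cancel hk]
    omega
  have hexpQ : ∀ q : G ⧸ H, q ^ 2 = 1 := by
    intro q
    induction q using QuotientGroup.induction_on with
    | H x =>
      have := congrArg (QuotientGroup.mk (s := H)) (hexpG x)
      simpa using this
  have second : Nonempty ((G ⧸ H) ≃* (Fin (k - 1) → Multiplicative (ZMod 2))) :=
    lemA (k - 1) cardQ hexpQ
  exact ⟨first, second⟩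
end
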